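/- Let E : A → D be a conditional expectation from a unital C*-algebra onto a unital C*-subalgebra, and define L₀ on B = A ⊕ D by L₀((a,d)) = ‖a − d‖_E where ‖x‖_E = ‖E(x*x)‖^{1/2}. Then L₀ is a strongly Leibniz seminorm: L₀ satisfies the Leibniz inequality with respect to the C*-norm on B and if (a,d) is invertible in B then L₀((a,d)⁻¹) ≤ ‖(a,d)⁻¹‖² L₀((a,d)). -/

import Mathlib

/-- The norm ‖x‖_E = ‖E(x*x)‖^{1/2} associated to a map E on a C*-algebra. -/
noncomputable def normE {A : Type*} [NormedRing A] [StarRing A] [CStarRing A]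
    [NormedAlgebra ℂ A] [StarModule ℂ A] (E : A →ₗ[ℂ] A) (x : A) : ℝ :=
  Real.sqrt ‖E (star x * x)‖

section Helpers
variable {A : Type*} [NormedRing A] [StarRing A] [CStarRing A]
    [NormedAlgebra ℂ A] [StarModule ℂ A] [CompleteSpace A]
    [PartialOrder A] [StarOrderedRing A]

private lemma myEnonneg (E : A →ₗ[ℂ] A) (hpos : ∀ a : A, 0 ≤ E (star a * a))
    {w : A} (hw : 0 ≤ w) : 0 ≤ E w := by
  letI : CStarAlgebra A := {}
  have hs : star (CFC.sqrt w) * CFC.sqrt w = w := by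
    rw [(IsSelfAdjoint.of_nonneg (CFC.sqrt_nonneg w)).star_eq, ← pow_two, CFC.sq_sqrt w hw]
  simpa [hs] using hpos (CFC.sqrt w)

private lemma myEmono (E : A →ₗ[ℂ] A) (hpos : ∀ a : A, 0 ≤ E (star a * a))
    {x y : A} (hxy : x ≤ y) : E x ≤ E y := by
  have := myEnonneg E hpos (sub_nonneg.2 hxy)
  rw [map_sub] at this
  exact sub_nonneg.mp this

private lemma normE_mul_left (E : A →ₗ[ℂ] A) (hpos : ∀ a : A, 0 ≤ E (star a * a))
    (a x : A) : normE E (a * x) ≤ ‖a‖ * normE E x := by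
  letI : CStarAlgebra A := {}
  have h1 : star (a * x) * (a * x) = star x * (star a * a) * x := by
    rw [star_mul]; simp [mul_assoc]
  have h2 : star x * (star a * a) * x ≤ star x * algebraMap ℝ A (‖a‖ ^ 2) * x :=
    star_left_conjugate_le_conjugate CStarAlgebra.star_mul_le_algebraMap_norm_sq x
  have h3 : star x * algebraMap ℝ A (‖a‖ ^ 2) * x = ((‖a‖ ^ 2 : ℝ) : ℂ) • (star x * x) := by
    rw [Algebra.algebraMap_eq_smul_one, ← Complex.coe_smul]
    rw [mul_smul_comm, smul_mul_assoc, mul_one]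
  have h4 : E (star (a * x) * (a * x)) ≤ ((‖a‖ ^ 2 : ℝ) : ℂ) • E (star x * x) := by
    have := myEmono E hpos (h1 ▸ h3 ▸ h2)
    rwa [map_smul] at this
  have h5 : ‖E (star (a * x) * (a * x))‖ ≤ ‖a‖ ^ 2 * ‖E (star x * x)‖ := by
    refine (CStarAlgebra.norm_le_norm_of_nonneg_of_le (hpos _) h4).trans ?_
    rw [norm_smul]
    simp [sq_abs]
  calc normE E (a * x) ≤ Real.sqrt (‖a‖ ^ 2 * ‖E (star x * x)‖) := Real.sqrt_le_sqrt h5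
    _ = ‖a‖ * normE E x := by
        rw [Real.sqrt_mul (sq_nonneg _), Real.sqrt_sq (norm_nonneg a)]; rfl

set_option linter.unusedSectionVars false in
private lemma normE_mul_right (D : StarSubalgebra ℂ A) (E : A →ₗ[ℂ] A)
    (hbimod : ∀ c ∈ D, ∀ d ∈ D, ∀ a : A, E (c * a * d) = c * E a * d)
    {d : A} (hd : d ∈ D) (x : A) : normE E (x * d) ≤ normE E x * ‖d‖ := by
  have h1 : star (x * d) * (x * d) = star d * (star x * x) * d := by
    rw [star_mul]; simp [mul_assoc]
  have h2 : E (star (x * d) * (x * d)) = star d * E (star x * x) * d := by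
    rw [h1, hbimod _ (star_mem hd) _ hd]
  have h3 : ‖E (star (x * d) * (x * d))‖ ≤ ‖E (star x * x)‖ * ‖d‖ ^ 2 := by
    rw [h2]
    calc ‖star d * E (star x * x) * d‖ ≤ ‖star d * E (star x * x)‖ * ‖d‖ := norm_mul_le _ _
      _ ≤ ‖star d‖ * ‖E (star x * x)‖ * ‖d‖ :=
          mul_le_mul_of_nonneg_right (norm_mul_le _ _) (norm_nonneg d)
      _ = ‖E (star x * x)‖ * ‖d‖ ^ 2 := by rw [norm_star]; ring
  calc normE E (x * d) ≤ Real.sqrt (‖E (star x * x)‖ * ‖d‖ ^ 2) := Real.sqrt_le_sqrt h3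
    _ = normE E x * ‖d‖ := by
        rw [Real.sqrt_mul (norm_nonneg _), Real.sqrt_sq (norm_nonneg d)]; rfl

set_option linter.unusedSectionVars false in
private lemma normE_neg (E : A →ₗ[ℂ] A) (x : A) : normE E (-x) = normE E x := by
  simp [normE]


variable {A : Type*} [NormedRing A] [StarRing A] [CStarRing A]
    [NormedAlgebra ℂ A] [StarModule ℂ A] [CompleteSpace A]
    [PartialOrder A] [StarOrderedRing A]

private lemma mynorm_le {h z : A} (h1 : -z ≤ h) (h2 : h ≤ z) (hz : 0 ≤ z) : ‖h‖ ≤ ‖z‖ := by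
  letI : CStarAlgebra A := {}
  rcases subsingleton_or_nontrivial A with hs | hnt
  · simp [Subsingleton.elim h 0]
  have hsa : IsSelfAdjoint h := by
    have := (IsSelfAdjoint.of_nonneg hz).sub (IsSelfAdjoint.of_nonneg (sub_nonneg.2 h2))
    simpa using this
  have hzsa : IsSelfAdjoint z := IsSelfAdjoint.of_nonneg hz
  have hub : h ≤ algebraMap ℝ A ‖z‖ := h2.trans hzsa.le_algebraMap_norm_self
  have hlb : -h ≤ algebraMap ℝ A ‖z‖ := (neg_le.mpr h1).trans hzsa.le_algebraMap_norm_self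
  rcases CStarAlgebra.norm_or_neg_norm_mem_spectrum hsa with hm | hm
  · exact (le_algebraMap_iff_spectrum_le (ha := hsa)).mp hub _ hm
  · have hm' : ‖h‖ ∈ spectrum ℝ (-h) := by
      rw [← spectrum.neg_eq]
      exact Set.mem_neg.mpr (by simpa using hm)
    exact (le_algebraMap_iff_spectrum_le (ha := hsa.neg)).mp hlb _ hm'

private lemma normE_add (E : A →ₗ[ℂ] A) (hpos : ∀ a : A, 0 ≤ E (star a * a))
    (hfaithful : ∀ a : A, E (star a * a) = 0 → a = 0) (x y : A) :
    normE E (x + y) ≤ normE E x + normE E y := by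
  by_cases hx : E (star x * x) = 0
  · rw [hfaithful x hx]; simp [normE]
  by_cases hy : E (star y * y) = 0
  · rw [hfaithful y hy]; simp [normE]
  set Nx := normE E x with hNxdef
  set Ny := normE E y with hNydef
  have hNx : 0 < Nx := Real.sqrt_pos.mpr (norm_pos_iff.mpr hx)
  have hNy : 0 < Ny := Real.sqrt_pos.mpr (norm_pos_iff.mpr hy)
  have hNx2 : Nx ^ 2 = ‖E (star x * x)‖ := Real.sq_sqrt (norm_nonneg _)
  have hNy2 : Ny ^ 2 = ‖E (star y * y)‖ := Real.sq_sqrt (norm_nonneg _)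
  set s : ℝ := Real.sqrt (Ny / Nx) with hsdef
  have hs : 0 < s := Real.sqrt_pos.mpr (div_pos hNy hNx)
  have hs2 : s ^ 2 = Ny / Nx := Real.sq_sqrt (div_pos hNy hNx).le
  set c : ℂ := (s : ℂ) with hcdef
  have hc : c ≠ 0 := by
    simp only [hcdef, ne_eq, Complex.ofReal_eq_zero]
    exact hs.ne'
  have hcc : star c = c := by
    rw [hcdef, Complex.star_def, Complex.conj_ofReal]
  have expand : ∀ u v : A, E (star (u + v) * (u + v)) =
      E (star u * u) + (E (star u * v) + E (star v * u)) + E (star v * v) := by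
    intro u v
    have : star (u + v) * (u + v) =
        star u * u + (star u * v + star v * u) + star v * v := by
      rw [star_add, add_mul, mul_add, mul_add]; abel
    rw [this, map_add, map_add, map_add]
  set u := c • x with hudef
  set v := c⁻¹ • y with hvdef
  have huv : star u * v = star x * y := by
    rw [hudef, hvdef, star_smul, hcc, smul_mul_smul_comm, mul_inv_cancel₀ hc, one_smul]
  have hvu : star v * u = star y * x := by
    rw [hudef, hvdef, star_smul, smul_mul_smul_comm, star_inv₀, hcc,
      inv_mul_cancel₀ hc, one_smul]
  have hEuu : E (star u * u) = ((s ^ 2 : ℝ) : ℂ) • E (star x * x) := by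
    have huu : star u * u = (c * c) • (star x * x) := by
      rw [hudef, star_smul, hcc, smul_mul_smul_comm]
    rw [huu, map_smul]
    congr 1
    rw [hcdef]; push_cast; ring
  have hEvv : E (star v * v) = (((s ^ 2)⁻¹ : ℝ) : ℂ) • E (star y * y) := by
    have hvv : star v * v = (c⁻¹ * c⁻¹) • (star y * y) := by
      rw [hvdef, star_smul, star_inv₀, hcc, smul_mul_smul_comm]
    rw [hvv, map_smul]
    congr 1
    rw [hcdef]; push_cast; ring
  set h := E (star x * y) + E (star y * x) with hhdef
  set z := E (star u * u) + E (star v * v) with hzdef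
  have hz : 0 ≤ z := add_nonneg (hpos u) (hpos v)
  have h1 : -z ≤ h := by
    have h0 := hpos (u + v)
    rw [expand u v, huv, hvu] at h0
    have h0' : (0 : A) ≤ h - -z := le_of_le_of_eq h0 (by rw [hhdef, hzdef]; abel)
    exact sub_nonneg.mp h0'
  have h2 : h ≤ z := by
    have h0 := hpos (u + -v)
    rw [expand u (-v)] at h0
    simp only [star_neg, mul_neg, neg_mul, neg_neg, map_neg, huv, hvu] at h0
    have h0' : (0 : A) ≤ z - h := le_of_le_of_eq h0 (by rw [hhdef, hzdef]; abel)
    exact sub_nonneg.mp h0'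
  have hEuunorm : ‖E (star u * u)‖ = Nx * Ny := by
    rw [hEuu, norm_smul, hs2, ← hNx2]
    simp only [Complex.norm_real, Real.norm_eq_abs, abs_of_nonneg (div_pos hNy hNx).le]
    field_simp
  have hEvvnorm : ‖E (star v * v)‖ = Nx * Ny := by
    rw [hEvv, norm_smul, hs2, ← hNy2]
    simp only [Complex.norm_real, Real.norm_eq_abs, abs_of_nonneg
      (inv_nonneg.mpr (div_pos hNy hNx).le)]
    rw [show (Ny / Nx)⁻¹ = Nx / Ny by rw [inv_div]]
    field_simp
  have hnz : ‖z‖ ≤ 2 * (Nx * Ny) := by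
    calc ‖z‖ ≤ ‖E (star u * u)‖ + ‖E (star v * v)‖ := norm_add_le _ _
      _ = 2 * (Nx * Ny) := by rw [hEuunorm, hEvvnorm]; ring
  have hnh : ‖h‖ ≤ 2 * (Nx * Ny) := (mynorm_le h1 h2 hz).trans hnz
  have hfin : ‖E (star (x + y) * (x + y))‖ ≤ (Nx + Ny) ^ 2 := by
    rw [expand x y, ← hhdef]
    calc ‖E (star x * x) + h + E (star y * y)‖
        ≤ ‖E (star x * x) + h‖ + ‖E (star y * y)‖ := norm_add_le _ _
      _ ≤ ‖E (star x * x)‖ + ‖h‖ + ‖E (star y * y)‖ := by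
          have := norm_add_le (E (star x * x)) h
          linarith
      _ ≤ Nx ^ 2 + 2 * (Nx * Ny) + Ny ^ 2 := by rw [hNx2, hNy2]; linarith
      _ = (Nx + Ny) ^ 2 := by ring
  calc normE E (x + y) ≤ Real.sqrt ((Nx + Ny) ^ 2) := Real.sqrt_le_sqrt hfin
    _ = Nx + Ny := Real.sqrt_sq (by positivity)
end Helpers

/-- Given a faithful conditional expectation E : A → D, the seminorm
L₀((a,d)) = ‖a − d‖_E on B = A ⊕ D is strongly Leibniz: it satisfies the Leibniz
inequality for the C*-norm ‖(a,d)‖ = max(‖a‖,‖d‖) on B, and for any invertible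
(a,d) ∈ B one has L₀((a,d)⁻¹) ≤ ‖(a,d)⁻¹‖² L₀((a,d)). -/
theorem condExp_Lzero_stronglyLeibniz {A : Type*} [NormedRing A] [StarRing A]
    [CStarRing A] [NormedAlgebra ℂ A] [StarModule ℂ A] [CompleteSpace A]
    [PartialOrder A] [StarOrderedRing A]
    (D : StarSubalgebra ℂ A) (hD : IsClosed (D : Set A))
    (E : A →ₗ[ℂ] A) (hrange : ∀ a, E a ∈ D) (hproj : ∀ d ∈ D, E d = d)
    (hpos : ∀ a : A, 0 ≤ E (star a * a))
    (hbimod : ∀ c ∈ D, ∀ d ∈ D, ∀ a : A, E (c * a * d) = c * E a * d)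
    (hfaithful : ∀ a : A, E (star a * a) = 0 → a = 0) :
    (∀ p q : A × ↥D, normE E (p.1 * q.1 - ↑(p.2 * q.2)) ≤
        ‖p‖ * normE E (q.1 - ↑q.2) + normE E (p.1 - ↑p.2) * ‖q‖) ∧
      ∀ u : (A × ↥D)ˣ, normE E ((↑(u⁻¹ : (A × ↥D)ˣ) : A × ↥D).1 - ↑(↑(u⁻¹ : (A × ↥D)ˣ) : A × ↥D).2) ≤
        ‖(↑(u⁻¹ : (A × ↥D)ˣ) : A × ↥D)‖ ^ 2 * normE E ((↑u : A × ↥D).1 - ↑(↑u : A × ↥D).2) := by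
  have normE_nonneg : ∀ x : A, 0 ≤ normE E x := fun x => Real.sqrt_nonneg _
  constructor
  · intro p q
    have hsplit : p.1 * q.1 - ↑(p.2 * q.2) =
        p.1 * (q.1 - ↑q.2) + (p.1 - ↑p.2) * ↑q.2 := by
      rw [MulMemClass.coe_mul, mul_sub, sub_mul]
      abel
    calc normE E (p.1 * q.1 - ↑(p.2 * q.2))
        = normE E (p.1 * (q.1 - ↑q.2) + (p.1 - ↑p.2) * ↑q.2) := by rw [hsplit]
      _ ≤ normE E (p.1 * (q.1 - ↑q.2)) + normE E ((p.1 - ↑p.2) * ↑q.2) :=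
          normE_add E hpos hfaithful _ _
      _ ≤ ‖p.1‖ * normE E (q.1 - ↑q.2) + normE E (p.1 - ↑p.2) * ‖(↑q.2 : A)‖ :=
          add_le_add (normE_mul_left E hpos _ _) (normE_mul_right D E hbimod q.2.2 _)
      _ ≤ ‖p‖ * normE E (q.1 - ↑q.2) + normE E (p.1 - ↑p.2) * ‖q‖ := by
          refine add_le_add (mul_le_mul_of_nonneg_right (norm_fst_le p) (normE_nonneg _))
            (mul_le_mul_of_nonneg_left ?_ (normE_nonneg _))
          show ‖q.2‖ ≤ ‖q‖
          exact norm_snd_le q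
  · intro u
    set a : A := (↑u : A × ↥D).1 with hadef
    set d : ↥D := (↑u : A × ↥D).2 with hddef
    set b : A := (↑(u⁻¹ : (A × ↥D)ˣ) : A × ↥D).1 with hbdef
    set e : ↥D := (↑(u⁻¹ : (A × ↥D)ˣ) : A × ↥D).2 with hedef
    have hba : b * a = 1 := congrArg Prod.fst u.inv_mul
    have hde : d * e = 1 := congrArg Prod.snd u.mul_inv
    have hde' : (↑d : A) * ↑e = 1 := by
      rw [← MulMemClass.coe_mul, hde, OneMemClass.coe_one]
    have hident : b - ↑e = b * ((↑d - a) * ↑e) := by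
      have : b * ((↑d - a) * ↑e) = b * (↑d * ↑e) - (b * a) * ↑e := by
        simp [sub_mul, mul_sub, mul_assoc]
      rw [this, hde', hba, mul_one, one_mul]
    have hb : ‖b‖ ≤ ‖(↑(u⁻¹ : (A × ↥D)ˣ) : A × ↥D)‖ := norm_fst_le _
    have he : ‖(↑e : A)‖ ≤ ‖(↑(u⁻¹ : (A × ↥D)ˣ) : A × ↥D)‖ := by
      show ‖e‖ ≤ _
      exact norm_snd_le _
    have hneg : normE E ((↑d : A) - a) = normE E (a - ↑d) := by
      rw [show (↑d : A) - a = -(a - ↑d) from (neg_sub a ↑d).symm, normE_neg]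
    calc normE E (b - ↑e) = normE E (b * ((↑d - a) * ↑e)) := by rw [hident]
      _ ≤ ‖b‖ * normE E ((↑d - a) * ↑e) := normE_mul_left E hpos _ _
      _ ≤ ‖b‖ * (normE E ((↑d : A) - a) * ‖(↑e : A)‖) := by
          gcongr
          exact normE_mul_right D E hbimod e.2 _
      _ = ‖b‖ * ‖(↑e : A)‖ * normE E (a - ↑d) := by rw [hneg]; ring
      _ ≤ ‖(↑(u⁻¹ : (A × ↥D)ˣ) : A × ↥D)‖ ^ 2 * normE E (a - ↑d) := by
          rw [pow_two]
          exact mul_le_mul_of_nonneg_right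
            (mul_le_mul hb he (norm_nonneg _) (norm_nonneg _)) (normE_nonneg _)
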